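/- Let V1, V2, V3 be commuting bounded operators on a Hilbert space H with V1 = V2*·V3 and V2 = V1*·V3. Then the block operator B1 = [[0, V1], [V2, 0]] on H ⊕ H is hyponormal, i.e., B1·B1* ≤ B1*·B1. -/

import Mathlib

open ContinuousLinearMap

/-- The 2×2 block operator `[[A, B], [C, D]]` acting on the Hilbert space `H ⊕₂ H`. -/
noncomputable def blockOp {H : Type*} [NormedAddCommGroup H] [InnerProductSpace ℂ H]
    (A B C D : H →L[ℂ] H) : WithLp 2 (H × H) →L[ℂ] WithLp 2 (H × H) :=
  (WithLp.prodContinuousLinearEquiv 2 ℂ H H).symm.toContinuousLinearMap ∘L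
    (((A ∘L fst ℂ H H) + (B ∘L snd ℂ H H)).prod
      ((C ∘L fst ℂ H H) + (D ∘L snd ℂ H H))) ∘L
    (WithLp.prodContinuousLinearEquiv 2 ℂ H H).toContinuousLinearMap

lemma blockOp_fst {H : Type*} [NormedAddCommGroup H] [InnerProductSpace ℂ H]
    (A B C D : H →L[ℂ] H) (x : WithLp 2 (H × H)) :
    (blockOp A B C D x).ofLp.1 = A x.ofLp.1 + B x.ofLp.2 := rfl

lemma blockOp_snd {H : Type*} [NormedAddCommGroup H] [InnerProductSpace ℂ H]
    (A B C D : H →L[ℂ] H) (x : WithLp 2 (H × H)) :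
    (blockOp A B C D x).ofLp.2 = C x.ofLp.1 + D x.ofLp.2 := rfl

lemma adjoint_blockOp {H : Type*} [NormedAddCommGroup H] [InnerProductSpace ℂ H] [CompleteSpace H]
    (V1 V2 : H →L[ℂ] H) :
    adjoint (blockOp 0 V1 V2 0) = blockOp 0 (adjoint V2) (adjoint V1) 0 := by
  symm
  rw [eq_adjoint_iff]
  intro x y
  simp only [WithLp.prod_inner_apply, blockOp_fst, blockOp_snd, zero_apply, zero_add, add_zero,
    adjoint_inner_left]
  ring

theorem stmt_13 {H : Type*} [NormedAddCommGroup H] [InnerProductSpace ℂ H] [CompleteSpace H]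
    (V1 V2 V3 : H →L[ℂ] H)
    (h12 : V1 * V2 = V2 * V1) (h13 : V1 * V3 = V3 * V1) (h23 : V2 * V3 = V3 * V2)
    (hV3 : ‖V3‖ ≤ 1)
    (h1 : V1 = adjoint V2 * V3) (h2 : V2 = adjoint V1 * V3)
    (B1 : WithLp 2 (H × H) →L[ℂ] WithLp 2 (H × H))
    (hB1 : B1 = blockOp 0 V1 V2 0) :
    (adjoint B1 * B1 - B1 * adjoint B1).IsPositive := by
  -- key componentwise norm bounds
  have key : ∀ (W U : H →L[ℂ] H), W = adjoint U * V3 → ∀ a : H, ‖adjoint W a‖ ≤ ‖U a‖ := by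
    intro W U hW a
    have : adjoint W = adjoint V3 * U := by
      rw [hW, ContinuousLinearMap.mul_def, adjoint_comp, adjoint_adjoint,
        ← ContinuousLinearMap.mul_def]
    rw [this]
    calc ‖(adjoint V3 * U) a‖ = ‖adjoint V3 (U a)‖ := rfl
      _ ≤ ‖adjoint V3‖ * ‖U a‖ := le_opNorm _ _
      _ ≤ 1 * ‖U a‖ := by
          apply mul_le_mul_of_nonneg_right _ (norm_nonneg _)
          rwa [LinearIsometryEquiv.norm_map adjoint V3]
      _ = ‖U a‖ := one_mul _
  have hnorm : ∀ x : WithLp 2 (H × H), ‖adjoint B1 x‖ ≤ ‖B1 x‖ := by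
    intro x
    rw [hB1, adjoint_blockOp]
    have e1 : ‖blockOp 0 (adjoint V2) (adjoint V1) 0 x‖ ^ 2
        = ‖adjoint V2 x.ofLp.2‖ ^ 2 + ‖adjoint V1 x.ofLp.1‖ ^ 2 := by
      rw [WithLp.prod_norm_sq_eq_of_L2, WithLp.fst, WithLp.snd, blockOp_fst, blockOp_snd]
      simp
    have e2 : ‖blockOp 0 V1 V2 0 x‖ ^ 2 = ‖V1 x.ofLp.2‖ ^ 2 + ‖V2 x.ofLp.1‖ ^ 2 := by
      rw [WithLp.prod_norm_sq_eq_of_L2, WithLp.fst, WithLp.snd, blockOp_fst, blockOp_snd]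
      simp
    have b1 : ‖adjoint V1 x.ofLp.1‖ ≤ ‖V2 x.ofLp.1‖ := key V1 V2 h1 x.ofLp.1
    have b2 : ‖adjoint V2 x.ofLp.2‖ ≤ ‖V1 x.ofLp.2‖ := key V2 V1 h2 x.ofLp.2
    have : ‖blockOp 0 (adjoint V2) (adjoint V1) 0 x‖ ^ 2 ≤ ‖blockOp 0 V1 V2 0 x‖ ^ 2 := by
      rw [e1, e2]
      gcongr
    exact (pow_le_pow_iff_left₀ (norm_nonneg _) (norm_nonneg _) two_ne_zero).mp this
  constructor
  · have hs1 : IsSelfAdjoint (adjoint B1 * B1) := by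
      rw [← star_eq_adjoint]; exact IsSelfAdjoint.star_mul_self B1
    have hs2 : IsSelfAdjoint (B1 * adjoint B1) := by
      rw [← star_eq_adjoint]; exact IsSelfAdjoint.mul_star_self B1
    exact (hs1.sub hs2).isSymmetric
  · intro x
    have h1' : (adjoint B1 * B1) x = adjoint B1 (B1 x) := rfl
    have h2' : (B1 * adjoint B1) x = B1 (adjoint B1 x) := rfl
    rw [reApplyInnerSelf, sub_apply, inner_sub_left, map_sub, h1', h2',
      adjoint_inner_left, ← adjoint_inner_right (A := B1) (x := adjoint B1 x)]
    rw [inner_self_eq_norm_sq (𝕜 := ℂ), inner_self_eq_norm_sq (𝕜 := ℂ)]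
    have := hnorm x
    nlinarith [norm_nonneg (adjoint B1 x), norm_nonneg (B1 x)]
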